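/- Every finite d-degenerate graph is ((d+1)m, m)-choosable for every positive integer m. -/

import Mathlib

/-- `G` is `d`-degenerate: every nonempty (induced) subgraph has a vertex of
degree at most `d`. -/
def Degenerate {V : Type*} [DecidableEq V] (G : SimpleGraph V) [DecidableRel G.Adj]
    (d : ℕ) : Prop :=
  ∀ s : Finset V, s.Nonempty → ∃ v ∈ s, (s.filter fun w => G.Adj v w).card ≤ d

/-- `G` is `(a,b)`-choosable. -/
def ChoosableAB {V : Type*} (G : SimpleGraph V) (a b : ℕ) : Prop :=
  ∀ L : V → Finset ℕ, (∀ v, (L v).card = a) →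
    ∃ C : V → Finset ℕ, (∀ v, C v ⊆ L v) ∧ (∀ v, (C v).card = b) ∧
      ∀ u v, G.Adj u v → Disjoint (C u) (C v)

theorem stmt_4 {V : Type*} [Fintype V] [DecidableEq V] (G : SimpleGraph V)
    [DecidableRel G.Adj] (d : ℕ) (hdeg : Degenerate G d) :
    ∀ m : ℕ, 0 < m → ChoosableAB G ((d + 1) * m) m := by
  intro m _hm L hL
  suffices h : ∀ s : Finset V, ∃ C : V → Finset ℕ,
      (∀ v ∈ s, C v ⊆ L v) ∧ (∀ v ∈ s, (C v).card = m) ∧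
      (∀ u ∈ s, ∀ v ∈ s, G.Adj u v → Disjoint (C u) (C v)) by
    obtain ⟨C, h1, h2, h3⟩ := h Finset.univ
    exact ⟨C, fun v => h1 v (Finset.mem_univ v), fun v => h2 v (Finset.mem_univ v),
      fun u v huv => h3 u (Finset.mem_univ u) v (Finset.mem_univ v) huv⟩
  intro s
  induction s using Finset.strongInduction with
  | _ s ih =>
    rcases s.eq_empty_or_nonempty with rfl | hne
    · exact ⟨fun _ => ∅, by simp, by simp, by simp⟩
    obtain ⟨v, hv, hdv⟩ := hdeg s hne
    obtain ⟨C, h1, h2, h3⟩ := ih (s.erase v) (Finset.erase_ssubset hv)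
    set N := (s.erase v).filter (fun w => G.Adj v w) with hN
    set F := N.biUnion C with hF
    have hNcard : N.card ≤ d := by
      refine le_trans (Finset.card_le_card ?_) hdv
      exact Finset.filter_subset_filter _ (Finset.erase_subset v s)
    have hFcard : F.card ≤ d * m := by
      calc F.card ≤ ∑ w ∈ N, (C w).card := Finset.card_biUnion_le
        _ ≤ ∑ _w ∈ N, m := by
            refine Finset.sum_le_sum fun w hw => ?_
            have hw' : w ∈ s.erase v := Finset.mem_of_mem_filter w hw
            exact (h2 w hw').le
        _ = N.card * m := by rw [Finset.sum_const, smul_eq_mul]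
        _ ≤ d * m := Nat.mul_le_mul_right m hNcard
    have hLF : m ≤ (L v \ F).card := by
      have h1' : (L v).card - F.card ≤ (L v \ F).card := Finset.le_card_sdiff F (L v)
      have : m ≤ (L v).card - F.card := by
        rw [hL v]
        have hr : (d + 1) * m = d * m + m := by ring
        omega
      exact le_trans this h1'
    obtain ⟨D, hDsub, hDcard⟩ := Finset.exists_subset_card_eq hLF
    refine ⟨Function.update C v D, ?_, ?_, ?_⟩
    · intro w hw
      rcases eq_or_ne w v with rfl | hwv
      · rw [Function.update_self]
        exact hDsub.trans (Finset.sdiff_subset)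
      · rw [Function.update_of_ne hwv]
        exact h1 w (Finset.mem_erase.mpr ⟨hwv, hw⟩)
    · intro w hw
      rcases eq_or_ne w v with rfl | hwv
      · rw [Function.update_self]; exact hDcard
      · rw [Function.update_of_ne hwv]
        exact h2 w (Finset.mem_erase.mpr ⟨hwv, hw⟩)
    · intro u hu w hw huw
      have key : ∀ x, x ∈ s.erase v → G.Adj v x →
          Disjoint D (C x) := by
        intro x hx hadj
        have hxF : C x ⊆ F := by
          intro c hc
          refine Finset.mem_biUnion.mpr ⟨x, ?_, hc⟩
          exact Finset.mem_filter.mpr ⟨hx, hadj⟩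
        have hDF : Disjoint D F :=
          Finset.disjoint_left.mpr fun c hc =>
            (Finset.mem_sdiff.mp (hDsub hc)).2
        exact hDF.mono_right hxF
      rcases eq_or_ne u v with rfl | huv
      · have hwv : w ≠ u := fun h => G.irrefl (h ▸ huw)
        rw [Function.update_self, Function.update_of_ne hwv]
        exact key w (Finset.mem_erase.mpr ⟨hwv, hw⟩) huw
      · rcases eq_or_ne w v with rfl | hwv
        · rw [Function.update_self, Function.update_of_ne huv]
          exact (key u (Finset.mem_erase.mpr ⟨huv, hu⟩) huw.symm).symm
        · rw [Function.update_of_ne huv, Function.update_of_ne hwv]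
          exact h3 u (Finset.mem_erase.mpr ⟨huv, hu⟩) w (Finset.mem_erase.mpr ⟨hwv, hw⟩) huw
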